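/- Let f be differentiable and strongly convex with parameters l ≤ L (i.e., f(y) - f(x) ≥ ⟨∇f(x), y-x⟩ + (l/2)‖y-x‖² and ‖∇f(x)-∇f(y)‖ ≤ L‖x-y‖), with minimizer x* and residual v_f(x) = f(x) - f(x*). Let x⁰, …, xᵐ be a sequence with gradients gʲ = ∇f(xʲ) and define λʲ = √((f(xʲ) - f(xʲ⁺¹))/‖gʲ‖²), where each step satisfies f(xʲ⁺¹) ≤ f(xʲ) - (1/(2L))‖gʲ‖². Suppose ρ ≥ 1, m ≥ ⌈8ρ√(L/l)⌉, and the two conditions hold: (i) ((f(xᵐ⁻¹) - f(x⁰))/4)·(Σ_{j=0}^{m-1} λʲ) + Σ_{j=0}^{m-1} λʲ⟨gʲ, xʲ - x⁰⟩ < 0, and (ii) ‖Σ_{j=0}^{m-1} λʲ gʲ‖ ≤ ρ√(Σ_{j=0}^{m-1} (λʲ)²‖gʲ‖²). Then v_f(xᵐ) ≤ (1/2)·v_f(x⁰). -/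

import Mathlib

set_option maxHeartbeats 1000000


open RealInnerProductSpace

theorem cgso_halving_lemma {n : ℕ}
    (f : EuclideanSpace ℝ (Fin n) → ℝ) (l L ρ : ℝ) (m : ℕ)
    (hl : 0 < l) (hlL : l ≤ L) (hρ : 1 ≤ ρ)
    (hf : Differentiable ℝ f)
    (hsc : ∀ x y, f y - f x ≥ ⟪gradient f x, y - x⟫ + l / 2 * ‖y - x‖ ^ 2)
    (hlip : ∀ x y, ‖gradient f x - gradient f y‖ ≤ L * ‖x - y‖)
    (xstar : EuclideanSpace ℝ (Fin n)) (hmin : ∀ x, f xstar ≤ f x)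
    (x : ℕ → EuclideanSpace ℝ (Fin n))
    (g : ℕ → EuclideanSpace ℝ (Fin n)) (hg : ∀ j, g j = gradient f (x j))
    (hgne : ∀ j < m, g j ≠ 0)
    (hdec : ∀ j < m, f (x (j + 1)) ≤ f (x j) - 1 / (2 * L) * ‖g j‖ ^ 2)
    (lam : ℕ → ℝ)
    (hlam : ∀ j, lam j = Real.sqrt ((f (x j) - f (x (j + 1))) / ‖g j‖ ^ 2))
    (hm : 8 * ρ * Real.sqrt (L / l) ≤ (m : ℝ))
    (h1 : (f (x (m - 1)) - f (x 0)) / 4 * (∑ j ∈ Finset.range m, lam j) +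
        ∑ j ∈ Finset.range m, lam j * ⟪g j, x j - x 0⟫ < 0)
    (h2 : ‖∑ j ∈ Finset.range m, lam j • g j‖ ≤
        ρ * Real.sqrt (∑ j ∈ Finset.range m, (lam j) ^ 2 * ‖g j‖ ^ 2)) :
    f (x m) - f xstar ≤ 1 / 2 * (f (x 0) - f xstar) := by
  have hL : 0 < L := lt_of_lt_of_le hl hlL
  have hρ0 : 0 < ρ := lt_of_lt_of_le one_pos hρ
  -- gradient zero at minimizer
  have hgrad0 : gradient f xstar = 0 := by
    have hloc : IsLocalMin f xstar := Filter.Eventually.of_forall hmin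
    have h := hloc.fderiv_eq_zero
    simp [gradient, h]
  set v0 := f (x 0) - f xstar with hv0def
  have hv0 : 0 ≤ v0 := sub_nonneg.2 (hmin _)
  -- distance bound
  have hdist : l / 2 * ‖x 0 - xstar‖ ^ 2 ≤ v0 := by
    have h := hsc xstar (x 0)
    rw [hgrad0] at h
    simp only [inner_zero_left, zero_add] at h
    linarith [h]
  have hdist2 : ‖x 0 - xstar‖ ^ 2 ≤ 2 / l * v0 := by
    rw [div_mul_eq_mul_div, le_div_iff₀ hl]
    nlinarith [hdist]
  -- per-step decrease lower bounds
  have hstepnn : ∀ j < m, 1 / (2 * L) * ‖g j‖ ^ 2 ≤ f (x j) - f (x (j + 1)) := by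
    intro j hj
    have := hdec j hj
    linarith
  have hstep : ∀ j < m, f (x (j + 1)) ≤ f (x j) := by
    intro j hj
    have h1' := hstepnn j hj
    have : (0:ℝ) ≤ 1 / (2 * L) * ‖g j‖ ^ 2 := by positivity
    linarith
  -- monotonicity
  have hmonoAux : ∀ d j, j + d ≤ m → f (x (j + d)) ≤ f (x j) := by
    intro d
    induction d with
    | zero => intro j _; simp
    | succ d ih =>
      intro j hjd
      have h1' : j + d < m := by omega
      have h2' := hstep (j + d) h1'
      have h3' := ih j (by omega)
      calc f (x (j + (d+1))) = f (x ((j + d) + 1)) := by ring_nf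
        _ ≤ f (x (j + d)) := h2'
        _ ≤ f (x j) := h3'
  have hmono : ∀ j ≤ m, f (x m) ≤ f (x j) := by
    intro j hj
    have := hmonoAux (m - j) j (by omega)
    have hj' : j + (m - j) = m := by omega
    rwa [hj'] at this
  -- lam basics
  have hlamnn : ∀ j, 0 ≤ lam j := fun j => (hlam j) ▸ Real.sqrt_nonneg _
  have hlamsq : ∀ j < m, lam j ^ 2 * ‖g j‖ ^ 2 = f (x j) - f (x (j + 1)):= by
    intro j hj
    have hgpos : (0:ℝ) < ‖g j‖ ^ 2 := pow_pos (norm_pos_iff.mpr (hgne j hj)) 2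
    have hnum : (0:ℝ) ≤ f (x j) - f (x (j + 1)) := by
      have := hstep j hj; linarith
    rw [hlam j, Real.sq_sqrt (div_nonneg hnum hgpos.le)]
    exact div_mul_cancel₀ _ hgpos.ne'
  -- telescoping sum of squares
  have htel : ∑ j ∈ Finset.range m, (lam j) ^ 2 * ‖g j‖ ^ 2 = f (x 0) - f (x m) := by
    rw [Finset.sum_congr rfl (fun j hj => hlamsq j (Finset.mem_range.mp hj))]
    exact Finset.sum_range_sub' (fun i => f (x i)) m
  -- norm of s bound
  set s := ∑ j ∈ Finset.range m, lam j • g j with hsdef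
  have hDle : f (x 0) - f (x m) ≤ v0 := by
    have := hmin (x m); simp only [hv0def]; linarith
  have hsle : ‖s‖ ≤ ρ * Real.sqrt v0 := by
    calc ‖s‖ ≤ ρ * Real.sqrt (f (x 0) - f (x m)) := by rw [← htel]; exact h2
      _ ≤ ρ * Real.sqrt v0 := by gcongr
  -- lam lower bound
  have hlamlb : ∀ j < m, Real.sqrt (1 / (2 * L)) ≤ lam j := by
    intro j hj
    rw [hlam j]
    apply Real.sqrt_le_sqrt
    have hgpos : (0:ℝ) < ‖g j‖ ^ 2 := pow_pos (norm_pos_iff.mpr (hgne j hj)) 2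
    rw [le_div_iff₀ hgpos]
    have := hstepnn j hj
    linarith
  set S := ∑ j ∈ Finset.range m, lam j with hSdef
  have hSlb : (m : ℝ) * Real.sqrt (1 / (2 * L)) ≤ S := by
    have := Finset.card_nsmul_le_sum (Finset.range m) lam (Real.sqrt (1 / (2 * L)))
      (fun j hj => hlamlb j (Finset.mem_range.mp hj))
    simpa [mul_comm] using this
  have hmpos : (8:ℝ) ≤ (m : ℝ) := by
    have hratio : (1:ℝ) ≤ L / l := (one_le_div hl).mpr hlL
    have : (1:ℝ) ≤ Real.sqrt (L / l) := by
      rw [show (1:ℝ) = Real.sqrt 1 by simp]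
      exact Real.sqrt_le_sqrt hratio
    nlinarith
  have hSlb2 : 8 * ρ * Real.sqrt (1 / (2 * l)) ≤ S := by
    have hkey : Real.sqrt (L / l) * Real.sqrt (1 / (2 * L)) = Real.sqrt (1 / (2 * l)) := by
      rw [← Real.sqrt_mul (by positivity)]
      congr 1
      field_simp
    calc 8 * ρ * Real.sqrt (1 / (2 * l))
        = 8 * ρ * Real.sqrt (L / l) * Real.sqrt (1 / (2 * L)) := by rw [← hkey]; try ring
      _ ≤ (m : ℝ) * Real.sqrt (1 / (2 * L)) :=
          mul_le_mul_of_nonneg_right hm (Real.sqrt_nonneg _)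
      _ ≤ S := hSlb
  have hSpos : 0 < S := by
    have h8 : (0:ℝ) < 8 * ρ * Real.sqrt (1 / (2 * l)) := by positivity
    linarith
  -- per-term inner product bound
  set vm := f (x m) - f xstar with hvmdef
  have hinner : ∀ j < m, vm + ⟪g j, xstar - x 0⟫ ≤ ⟪g j, x j - x 0⟫ := by
    intro j hj
    have hsc' := hsc (x j) xstar
    rw [← hg j] at hsc'
    have hn : (0:ℝ) ≤ l / 2 * ‖xstar - x j‖ ^ 2 := by positivity
    have h1' : ⟪g j, xstar - x j⟫ ≤ f xstar - f (x j) := by linarith [hsc']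
    have h2' : ⟪g j, x j - x 0⟫ - ⟪g j, xstar - x 0⟫ = ⟪g j, x j - xstar⟫ := by
      rw [← inner_sub_right]
      congr 1
      abel
    have h3' : ⟪g j, x j - xstar⟫ = - ⟪g j, xstar - x j⟫ := by
      rw [← inner_neg_right]
      congr 1
      abel
    have h4' := hmono j (le_of_lt hj)
    have hvmle : vm ≤ f (x j) - f xstar := by rw [hvmdef]; linarith
    linarith [h1', h2', h3', hvmle]
  -- sum bound
  have hsuminner : ⟪s, xstar - x 0⟫ = ∑ j ∈ Finset.range m, lam j * ⟪g j, xstar - x 0⟫ := by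
    rw [hsdef, sum_inner]
    exact Finset.sum_congr rfl (fun j _ => real_inner_smul_left _ _ _)
  have hsum : S * vm + ⟪s, xstar - x 0⟫ ≤ ∑ j ∈ Finset.range m, lam j * ⟪g j, x j - x 0⟫ := by
    rw [hsuminner, hSdef, Finset.sum_mul]
    rw [← Finset.sum_add_distrib]
    apply Finset.sum_le_sum
    intro j hj
    have hj' := Finset.mem_range.mp hj
    have h := mul_le_mul_of_nonneg_left (hinner j hj') (hlamnn j)
    have hma : lam j * (vm + ⟪g j, xstar - x 0⟫) = lam j * vm + lam j * ⟪g j, xstar - x 0⟫ :=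
      mul_add _ _ _
    linarith [h, hma]
  -- Cauchy-Schwarz
  have hcs : - ⟪s, xstar - x 0⟫ ≤ ‖s‖ * ‖x 0 - xstar‖ := by
    have h := real_inner_le_norm s (x 0 - xstar)
    have heq : ⟪s, x 0 - xstar⟫ = - ⟪s, xstar - x 0⟫ := by
      rw [← inner_neg_right]; congr 1; abel
    rw [heq] at h
    linarith
  -- bound ‖s‖ * ‖x0 - xstar‖ ≤ ρ * sqrt(2/l) * v0
  have hprod : ‖s‖ * ‖x 0 - xstar‖ ≤ ρ * Real.sqrt (2 / l) * v0 := by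
    have hx0 : ‖x 0 - xstar‖ ≤ Real.sqrt (2 / l * v0) := by
      rw [← Real.sqrt_sq (norm_nonneg _)]
      exact Real.sqrt_le_sqrt hdist2
    calc ‖s‖ * ‖x 0 - xstar‖ ≤ (ρ * Real.sqrt v0) * Real.sqrt (2 / l * v0) := by
          apply mul_le_mul hsle hx0 (norm_nonneg _)
          positivity
      _ = ρ * Real.sqrt (2 / l) * v0 := by
          rw [Real.sqrt_mul (by positivity)]
          rw [show ρ * Real.sqrt v0 * (Real.sqrt (2 / l) * Real.sqrt v0)
              = ρ * Real.sqrt (2 / l) * (Real.sqrt v0 * Real.sqrt v0) by ring]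
          rw [Real.mul_self_sqrt hv0]
  -- sqrt(2/l) = 2 * sqrt(1/(2l))
  have hsqrteq : Real.sqrt (2 / l) = 2 * Real.sqrt (1 / (2 * l)) := by
    have h4 : Real.sqrt 4 = 2 := by
      rw [show (4:ℝ) = 2 ^ 2 by norm_num, Real.sqrt_sq (by norm_num : (0:ℝ) ≤ 2)]
    have harg : 2 / l = 4 * (1 / (2 * l)) := by
      rw [mul_one_div, div_eq_div_iff hl.ne' (by positivity : (2 * l) ≠ 0)]
      ring
    rw [harg, Real.sqrt_mul (by norm_num : (0:ℝ) ≤ 4), h4]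
  -- so ρ * sqrt(2/l) * v0 ≤ S/4 * v0
  have hfinal1 : ρ * Real.sqrt (2 / l) * v0 ≤ S / 4 * v0 := by
    have : ρ * Real.sqrt (2 / l) ≤ S / 4 := by
      rw [hsqrteq]
      linarith [hSlb2]
    exact mul_le_mul_of_nonneg_right this hv0
  -- f(x 0) - f(x (m-1)) ≤ v0
  have hfm1 : f (x 0) - f (x (m - 1)) ≤ v0 := by
    have := hmin (x (m - 1)); simp only [hv0def]; linarith
  -- abstract inner products as scalars and make lets opaque
  obtain ⟨I, hIdef⟩ : ∃ I : ℝ, I = ⟪s, xstar - x 0⟫ := ⟨_, rfl⟩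
  obtain ⟨N, hNdef⟩ : ∃ N : ℝ, N = ‖s‖ * ‖x 0 - xstar‖ := ⟨_, rfl⟩
  have hA : (f (x (m - 1)) - f (x 0)) / 4 * S + (S * vm + I) < 0 := by
    rw [hIdef]
    exact lt_of_le_of_lt (add_le_add_right hsum _) h1
  have hcs' : -I ≤ N := by rw [hIdef, hNdef]; exact hcs
  have hprod' : N ≤ ρ * Real.sqrt (2 / l) * v0 := by rw [hNdef]; exact hprod
  have hC : -((f (x (m - 1)) - f (x 0)) / 4 * S) ≤ S / 4 * v0 := by
    have h := mul_nonneg hSpos.le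
      (show (0:ℝ) ≤ v0 + (f (x (m - 1)) - f (x 0)) by linarith)
    nlinarith [h]
  have hhalf : S / 4 * v0 + S / 4 * v0 = S * (v0 / 2) := by ring
  have hlt : S * vm < S * (v0 / 2) := by linarith [hA, hcs', hprod', hfinal1, hC, hhalf]
  have hvml : vm < v0 / 2 := lt_of_mul_lt_mul_left hlt hSpos.le
  rw [hvmdef, hv0def] at hvml
  linarith
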